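/- arXiv:2206.03724 — 5 statements merged into one kernel-verified Lean document; each statement's English description precedes it below -/
import Mathlib

section
/- Let I = [α_I, α'_I) be a bounded half-open interval with cutoff radii ε_I, ε'_I > 0 satisfying ε_I + ε'_I ≤ |I|. Then for every n ∈ ℕ₀ and every x ∈ ℝ, the (continuous representative of the) brushlet w_{n,I} satisfies w_{n,I}(x) = √(|I|/2) · e^{i α_I x} · [ g_I(|I|(x + e_{n,I})) + g_I(|I|(x − e_{n,I})) ], where e_{n,I} := π(n + 1/2)/|I|. -/
open MeasureTheory

/-- The bell function `b_I(ξ) = ρ((ξ − α)/ε) ρ((α' − ξ)/ε')`. -/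
noncomputable def bellFn (ρ : ℝ → ℝ) (α α' ε ε' : ℝ) (ξ : ℝ) : ℝ :=
  ρ ((ξ - α) / ε) * ρ ((α' - ξ) / ε')

/-- Pointwise inverse Fourier transform, for the normalization
`(𝓕 f)(ξ) = (2π)^{-1/2} ∫ f(x) e^{-ixξ} dx`. -/
noncomputable def invFourier (g : ℝ → ℂ) (x : ℝ) : ℂ :=
  ((Real.sqrt (2 * Real.pi))⁻¹ : ℂ) * ∫ ξ : ℝ, g ξ * Complex.exp (Complex.I * x * ξ)

/-- Frequency side of the brushlet `w_{n,I}`: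
`(𝓕 w_{n,I})(ξ) = √(2/|I|) b_I(ξ) cos(π(n + 1/2)(ξ − α)/|I|)`. -/
noncomputable def brushletHat (ρ : ℝ → ℝ) (α α' ε ε' : ℝ) (n : ℕ) (ξ : ℝ) : ℝ :=
  Real.sqrt (2 / (α' - α)) * bellFn ρ α α' ε ε' ξ *
    Real.cos (Real.pi * ((n : ℝ) + 1 / 2) * (ξ - α) / (α' - α))

/-- The brushlet `w_{n,I}` (continuous representative), obtained by inverse Fourier
transform of `brushletHat`. -/
noncomputable def brushlet (ρ : ℝ → ℝ) (α α' ε ε' : ℝ) (n : ℕ) (x : ℝ) : ℂ :=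
  invFourier (fun ξ => (brushletHat ρ α α' ε ε' n ξ : ℂ)) x

/-- Frequency side of the central bell function:
`ĝ_I(ξ) = ρ(|I|ξ/ε) ρ(|I|(1 − ξ)/ε')`. -/
noncomputable def centralBellHat (ρ : ℝ → ℝ) (α α' ε ε' : ℝ) (ξ : ℝ) : ℝ :=
  ρ ((α' - α) * ξ / ε) * ρ ((α' - α) * (1 - ξ) / ε')

/-- The central bell function `g_I = 𝓕⁻¹ ĝ_I` (continuous representative). -/
noncomputable def centralBell (ρ : ℝ → ℝ) (α α' ε ε' : ℝ) (x : ℝ) : ℂ :=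
  invFourier (fun ξ => (centralBellHat ρ α α' ε ε' ξ : ℂ)) x

/-- Time-domain representation of the brushlet:
`w_{n,I}(x) = √(|I|/2) e^{iαx} [g_I(|I|(x + e_{n,I})) + g_I(|I|(x − e_{n,I}))]`
with `e_{n,I} = π(n + 1/2)/|I|`. -/
theorem stmt10 (ρ : ℝ → ℝ) (hρsmooth : ∀ m : ℕ, ContDiff ℝ m ρ)
    (hρ0 : ∀ ξ, 0 ≤ ρ ξ) (hρ1 : ∀ ξ, ρ ξ ≤ 1)
    (hρneg : ∀ ξ, ξ ≤ -1 → ρ ξ = 0) (hρpos : ∀ ξ, 1 ≤ ξ → ρ ξ = 1)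
    (hρsq : ∀ ξ, ρ ξ ^ 2 + ρ (-ξ) ^ 2 = 1)
    (α α' : ℝ) (hI : α < α') (ε ε' : ℝ) (hε : 0 < ε) (hε' : 0 < ε')
    (hsum : ε + ε' ≤ α' - α) (n : ℕ) (x : ℝ) :
    brushlet ρ α α' ε ε' n x =
      (Real.sqrt ((α' - α) / 2) : ℂ) * Complex.exp (Complex.I * α * x) *
        (centralBell ρ α α' ε ε'
            ((α' - α) * (x + Real.pi * ((n : ℝ) + 1 / 2) / (α' - α))) +
          centralBell ρ α α' ε ε'
            ((α' - α) * (x - Real.pi * ((n : ℝ) + 1 / 2) / (α' - α)))) := by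
  have hρc : Continuous ρ := (hρsmooth 0).continuous
  set L := α' - α with hLdef
  have hL : (0 : ℝ) < L := by simp only [hLdef]; linarith
  have hLne : L ≠ 0 := hL.ne'
  set c := Real.pi * ((n : ℝ) + 1 / 2) with hcdef
  -- continuity and compact support of the central bell hat
  have hg0c : Continuous (centralBellHat ρ α α' ε ε') := by
    unfold centralBellHat
    exact (hρc.comp (by continuity)).mul (hρc.comp (by continuity))
  have hg0cs : HasCompactSupport (centralBellHat ρ α α' ε ε') := by
    apply HasCompactSupport.intro (isCompact_Icc (a := -(ε / L)) (b := 1 + ε' / L))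
    intro u hu
    simp only [Set.mem_Icc, not_and_or, not_le] at hu
    rcases hu with hu | hu
    · have hu' : u < -ε / L := by rw [neg_div]; exact hu
      have h' : u * L < -ε := (lt_div_iff₀ hL).mp hu'
      have h1 : L * u / ε ≤ -1 := by
        rw [div_le_iff₀ hε]
        nlinarith
      simp only [centralBellHat, ← hLdef, hρneg _ h1, zero_mul]
    · have hu' : 1 - u < -ε' / L := by rw [neg_div]; linarith
      have h' : (1 - u) * L < -ε' := (lt_div_iff₀ hL).mp hu'
      have h2 : L * (1 - u) / ε' ≤ -1 := by
        rw [div_le_iff₀ hε']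
        nlinarith
      simp only [centralBellHat, ← hLdef, hρneg _ h2, mul_zero]
  have hint : ∀ t : ℝ, Integrable
      (fun u : ℝ => (centralBellHat ρ α α' ε ε' u : ℂ) * Complex.exp (Complex.I * t * u)) := by
    intro t
    apply Continuous.integrable_of_hasCompactSupport
    · exact (Complex.continuous_ofReal.comp hg0c).mul (by continuity)
    · exact (hg0cs.comp_left (g := Complex.ofReal) rfl).mul_right
  -- pointwise identity after change of variables
  have key : ∀ u : ℝ,
      ((brushletHat ρ α α' ε ε' n (L * u + α) : ℝ) : ℂ) *
          Complex.exp (Complex.I * (x : ℂ) * ((L * u + α : ℝ) : ℂ)) =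
        ((Real.sqrt (2 / L) : ℝ) : ℂ) * Complex.exp (Complex.I * (α : ℂ) * (x : ℂ)) * (2 : ℂ)⁻¹ *
          ((centralBellHat ρ α α' ε ε' u : ℂ) *
              Complex.exp (Complex.I * ((L * x + c : ℝ) : ℂ) * (u : ℂ)) +
            (centralBellHat ρ α α' ε ε' u : ℂ) *
              Complex.exp (Complex.I * ((L * x - c : ℝ) : ℂ) * (u : ℂ))) := by
    intro u
    have E1 : Complex.exp (Complex.I * (x : ℂ) * ((L : ℂ) * u + α)) =
        Complex.exp (Complex.I * (α : ℂ) * x) * Complex.exp (Complex.I * ((x : ℂ) * L) * u) := by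
      rw [← Complex.exp_add]; congr 1; ring
    have E2 : Complex.exp (Complex.I * ((L : ℂ) * x + c) * u) =
        Complex.exp (Complex.I * ((x : ℂ) * L) * u) *
          Complex.exp ((c : ℂ) * u * Complex.I) := by
      rw [← Complex.exp_add]; congr 1; ring
    have E3 : Complex.exp (Complex.I * ((L : ℂ) * x - c) * u) =
        Complex.exp (Complex.I * ((x : ℂ) * L) * u) *
          Complex.exp (-((c : ℂ) * u) * Complex.I) := by
      rw [← Complex.exp_add]; congr 1; ring
    have E4 : Complex.cos ((c : ℂ) * u) =
        (Complex.exp ((c : ℂ) * u * Complex.I) + Complex.exp (-((c : ℂ) * u) * Complex.I)) / 2 := by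
      linear_combination (Complex.two_cos ((c : ℂ) * (u : ℂ))) / 2
    simp only [brushletHat, bellFn, centralBellHat, ← hLdef, ← hcdef]
    rw [show L * u + α - α = L * u from by ring]
    rw [show α' - (L * u + α) = L * (1 - u) from by simp only [hLdef]; ring]
    rw [show c * (L * u) / L = c * u from by field_simp]
    push_cast
    rw [E1, E2, E3, E4]
    ring
  -- change of variables in the integral
  have hCV : (∫ ξ : ℝ, ((brushletHat ρ α α' ε ε' n ξ : ℝ) : ℂ) *
        Complex.exp (Complex.I * (x : ℂ) * (ξ : ℂ))) =
      L • ∫ u : ℝ, ((brushletHat ρ α α' ε ε' n (L * u + α) : ℝ) : ℂ) *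
        Complex.exp (Complex.I * (x : ℂ) * ((L * u + α : ℝ) : ℂ)) := by
    set F : ℝ → ℂ := fun ξ =>
      ((brushletHat ρ α α' ε ε' n ξ : ℝ) : ℂ) * Complex.exp (Complex.I * (x : ℂ) * (ξ : ℂ))
      with hF
    have h1 : (∫ u : ℝ, F (L * u + α)) = |L⁻¹| • ∫ y : ℝ, F (y + α) :=
      MeasureTheory.Measure.integral_comp_mul_left (fun y => F (y + α)) L
    calc (∫ ξ : ℝ, F ξ) = L • (|L⁻¹| • ∫ y : ℝ, F (y + α)) := by
          rw [MeasureTheory.integral_add_right_eq_self F α, smul_smul,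
            abs_of_pos (inv_pos.mpr hL), mul_inv_cancel₀ hLne, one_smul]
      _ = L • ∫ u : ℝ, F (L * u + α) := by rw [h1]
  -- rewrite the arguments of the central bells
  rw [show L * (x + c / L) = L * x + c from by field_simp,
    show L * (x - c / L) = L * x - c from by field_simp]
  simp only [brushlet, centralBell, invFourier]
  rw [hCV]
  have hsplit : (∫ u : ℝ, ((brushletHat ρ α α' ε ε' n (L * u + α) : ℝ) : ℂ) *
        Complex.exp (Complex.I * (x : ℂ) * ((L * u + α : ℝ) : ℂ))) =
      ((Real.sqrt (2 / L) : ℝ) : ℂ) * Complex.exp (Complex.I * (α : ℂ) * (x : ℂ)) * (2 : ℂ)⁻¹ *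
        ((∫ u : ℝ, (centralBellHat ρ α α' ε ε' u : ℂ) *
            Complex.exp (Complex.I * ((L * x + c : ℝ) : ℂ) * (u : ℂ))) +
          ∫ u : ℝ, (centralBellHat ρ α α' ε ε' u : ℂ) *
            Complex.exp (Complex.I * ((L * x - c : ℝ) : ℂ) * (u : ℂ))) := by
    rw [← MeasureTheory.integral_add (hint (L * x + c)) (hint (L * x - c)),
      ← MeasureTheory.integral_const_mul]
    exact MeasureTheory.integral_congr_ae (Filter.Eventually.of_forall fun u => key u)
  rw [hsplit]
  have hspos : 0 < Real.sqrt (L / 2) := Real.sqrt_pos.mpr (by positivity)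
  have hs : Real.sqrt (L / 2) ^ 2 = L / 2 := Real.sq_sqrt (by positivity)
  have h2L : Real.sqrt (2 / L) * L = 2 * Real.sqrt (L / 2) := by
    rw [show (2 : ℝ) / L = (L / 2)⁻¹ from by rw [inv_div], Real.sqrt_inv,
      inv_mul_eq_div, div_eq_iff hspos.ne']
    nlinarith [hs]
  have h3 : ((Real.sqrt (L / 2) : ℝ) : ℂ) = ((Real.sqrt (2 / L) : ℝ) : ℂ) * (L : ℂ) / 2 := by
    have : (Real.sqrt (2 / L) * L : ℝ) = 2 * Real.sqrt (L / 2) := h2L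
    have := congrArg (fun r : ℝ => (r : ℂ)) this
    push_cast at this
    linear_combination -this / 2
  rw [h3, Complex.real_smul]
  push_cast
  ring
end

section
/- Let c ∈ (0, 1/2] and r ≥ 1. There exists a constant C = C(r, c, ρ) < ∞ such that for every bounded half-open interval I = [α_I, α'_I) with cutoff radii satisfying ε_I ≥ c|I|, ε'_I ≥ c|I| and ε_I + ε'_I ≤ |I|, the central bell function obeys |g_I(x)| ≤ C (1 + |x|)^{-r} for all x ∈ ℝ; in particular the constant C is independent of I. -/
open MeasureTheory

section Aux
open FourierTransform Real Complex

variable {F : Type*} [NormedAddCommGroup F] [NormedSpace ℝ F]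

lemma aux_iteratedDeriv_zero_fun (n : ℕ) : iteratedDeriv n (fun _ : ℝ => (0 : F)) = fun _ => 0 := by
  induction n with
  | zero => simp
  | succ n ih =>
    rw [iteratedDeriv_succ']
    have : deriv (fun _ : ℝ => (0 : F)) = fun _ => (0 : F) := by
      funext x; simp
    rw [this, ih]

lemma aux_iteratedDeriv_const (n : ℕ) (hn : n ≠ 0) (cst : F) :
    iteratedDeriv n (fun _ : ℝ => cst) = fun _ => 0 := by
  obtain ⟨m, rfl⟩ := Nat.exists_eq_succ_of_ne_zero hn
  rw [iteratedDeriv_succ']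
  have : deriv (fun _ : ℝ => cst) = fun _ : ℝ => (0 : F) := by
    funext x; simp
  rw [this, aux_iteratedDeriv_zero_fun]

/-- Uniform bounds for all iterated derivatives of the ramp function. -/
lemma aux_rho_bound (ρ : ℝ → ℝ) (hρsmooth : ∀ m : ℕ, ContDiff ℝ m ρ)
    (hρ0 : ∀ ξ, 0 ≤ ρ ξ) (hρ1 : ∀ ξ, ρ ξ ≤ 1)
    (hρneg : ∀ ξ, ξ ≤ -1 → ρ ξ = 0) (hρpos : ∀ ξ, 1 ≤ ξ → ρ ξ = 1) (k : ℕ) :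
    ∃ M : ℝ, 0 ≤ M ∧ ∀ x, |iteratedDeriv k ρ x| ≤ M := by
  cases k with
  | zero =>
    refine ⟨1, zero_le_one, fun x => ?_⟩
    rw [iteratedDeriv_zero, abs_le]
    exact ⟨by linarith [hρ0 x], hρ1 x⟩
  | succ k =>
    have hsupp : ∀ x : ℝ, x ∉ Set.Icc (-1 : ℝ) 1 → iteratedDeriv (k + 1) ρ x = 0 := by
      intro x hx
      rw [Set.mem_Icc, not_and_or] at hx
      rcases hx with hx | hx
      · push_neg at hx
        have heq : Set.EqOn ρ (fun _ => (0 : ℝ)) (Set.Iio (-1 : ℝ)) :=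
          fun y hy => hρneg y (le_of_lt hy)
        rw [heq.iteratedDeriv_of_isOpen isOpen_Iio (k + 1) hx,
          aux_iteratedDeriv_const _ (Nat.succ_ne_zero k)]
      · push_neg at hx
        have heq : Set.EqOn ρ (fun _ => (1 : ℝ)) (Set.Ioi (1 : ℝ)) :=
          fun y hy => hρpos y (le_of_lt hy)
        rw [heq.iteratedDeriv_of_isOpen isOpen_Ioi (k + 1) hx,
          aux_iteratedDeriv_const _ (Nat.succ_ne_zero k)]
    have hcs : HasCompactSupport (iteratedDeriv (k + 1) ρ) :=
      HasCompactSupport.intro isCompact_Icc hsupp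
    have hcont : Continuous (iteratedDeriv (k + 1) ρ) :=
      (hρsmooth (k + 2)).continuous_iteratedDeriv (k + 1) (by exact_mod_cast Nat.le_succ (k + 1))
    obtain ⟨M, hM⟩ := hcs.exists_bound_of_continuous hcont
    refine ⟨max M 0, le_max_right _ _, fun x => ?_⟩
    exact le_trans (by simpa using hM x) (le_max_left _ _)

end Aux

open FourierTransform in
set_option maxHeartbeats 1000000 in
/-- Uniform polynomial decay of central bell functions: for
`c ∈ (0, 1/2]` and `r ≥ 1` there is `C = C(r, c, ρ)` such that for every bounded
half-open interval `I = [α, α')` with cutoff radii `ε ≥ c|I|`, `ε' ≥ c|I|`,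
`ε + ε' ≤ |I|`, one has `|g_I(x)| ≤ C (1 + |x|)^{-r}` for all `x ∈ ℝ`. -/
theorem stmt11 (ρ : ℝ → ℝ) (hρsmooth : ∀ m : ℕ, ContDiff ℝ m ρ)
    (hρ0 : ∀ ξ, 0 ≤ ρ ξ) (hρ1 : ∀ ξ, ρ ξ ≤ 1)
    (hρneg : ∀ ξ, ξ ≤ -1 → ρ ξ = 0) (hρpos : ∀ ξ, 1 ≤ ξ → ρ ξ = 1)
    (hρsq : ∀ ξ, ρ ξ ^ 2 + ρ (-ξ) ^ 2 = 1)
    (c : ℝ) (hc0 : 0 < c) (hc : c ≤ 1 / 2) (r : ℝ) (hr : 1 ≤ r) :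
    ∃ C : ℝ, ∀ α α' ε ε' : ℝ, α < α' → c * (α' - α) ≤ ε → c * (α' - α) ≤ ε' →
      ε + ε' ≤ α' - α → ∀ x : ℝ,
        ‖centralBell ρ α α' ε ε' x‖ ≤ C * (1 + |x|) ^ (-r) := by
  choose M hM0 hM using aux_rho_bound ρ hρsmooth hρ0 hρ1 hρneg hρpos
  set nn : ℕ := max 1 ⌈r⌉₊ with hnn
  have hrnn : r ≤ (nn : ℝ) := by
    refine le_trans (Nat.le_ceil r) ?_
    exact_mod_cast Nat.le_max_right 1 ⌈r⌉₊
  have hc1 : (1 : ℝ) ≤ c⁻¹ := by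
    rw [le_inv_comm₀ one_pos hc0]; linarith
  set B : ℝ := 1 + ∑ i ∈ Finset.range (nn + 1), M i with hB
  have hB1 : (1 : ℝ) ≤ B := by
    have : (0 : ℝ) ≤ ∑ i ∈ Finset.range (nn + 1), M i :=
      Finset.sum_nonneg fun i _ => hM0 i
    simp only [hB]; linarith
  have hMB : ∀ i ≤ nn, M i ≤ B := by
    intro i hi
    have : M i ≤ ∑ j ∈ Finset.range (nn + 1), M j :=
      Finset.single_le_sum (fun j _ => hM0 j) (Finset.mem_range.2 (Nat.lt_succ_of_le hi))
    simp only [hB]; linarith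
  set P : ℝ := c⁻¹ ^ nn * B with hP
  have hP0 : 0 ≤ P := by positivity
  set D : ℝ := 2 ^ nn * P ^ 2 with hD
  have hD0 : 0 ≤ D := by positivity
  refine ⟨3 * D * 2 ^ nn, ?_⟩
  intro α α' ε ε' hαα hε hε' hsum x
  set L : ℝ := α' - α with hLdef
  have hL0 : 0 < L := sub_pos.2 hαα
  have hε0 : 0 < ε := lt_of_lt_of_le (by positivity) hε
  have hε'0 : 0 < ε' := lt_of_lt_of_le (by positivity) hε'
  set a : ℝ := L / ε with ha
  set b : ℝ := L / ε' with hb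
  have ha1 : 1 ≤ a := (one_le_div hε0).2 (by linarith)
  have hb1 : 1 ≤ b := (one_le_div hε'0).2 (by linarith)
  have hac : a ≤ c⁻¹ := by
    rw [ha, div_le_iff₀ hε0, inv_mul_eq_div, le_div_iff₀ hc0]
    linarith [hε]
  have hbc : b ≤ c⁻¹ := by
    rw [hb, div_le_iff₀ hε'0, inv_mul_eq_div, le_div_iff₀ hc0]
    linarith [hε']
  have ha0 : 0 ≤ a := le_trans zero_le_one ha1
  have hb0 : 0 ≤ b := le_trans zero_le_one hb1
  -- the two real factors
  set F₁ : ℝ → ℝ := fun ξ => ρ (a * ξ) with hF₁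
  set F₂ : ℝ → ℝ := fun ξ => ρ (b * (1 - ξ)) with hF₂
  set G : ℝ → ℂ := fun ξ => (centralBellHat ρ α α' ε ε' ξ : ℂ) with hGdef
  have hGeq : G = fun ξ => (F₁ ξ : ℂ) * (F₂ ξ : ℂ) := by
    funext ξ
    have e1 : L * ξ / ε = L / ε * ξ := by ring
    have e2 : L * (1 - ξ) / ε' = L / ε' * (1 - ξ) := by ring
    simp only [hGdef, centralBellHat, hF₁, hF₂, ← hLdef, e1, e2, ← ha, ← hb]
    push_cast
    ring
  -- smoothness
  have hF₁sm : ∀ m : ℕ, ContDiff ℝ m F₁ := fun m =>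
    (hρsmooth m).comp (contDiff_const.mul contDiff_id)
  have hF₂sm : ∀ m : ℕ, ContDiff ℝ m F₂ := fun m =>
    (hρsmooth m).comp (contDiff_const.mul (contDiff_const.sub contDiff_id))
  have hGsm : ∀ m : ℕ, ContDiff ℝ m G := by
    intro m
    rw [hGeq]
    exact (Complex.ofRealCLM.contDiff.comp (hF₁sm m)).mul
      (Complex.ofRealCLM.contDiff.comp (hF₂sm m))
  -- derivative bounds for the factors
  have hF₁d : ∀ i, i ≤ nn → ∀ y : ℝ, ‖iteratedFDeriv ℝ i F₁ y‖ ≤ P := by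
    intro i hi y
    rw [norm_iteratedFDeriv_eq_norm_iteratedDeriv]
    have := iteratedDeriv_comp_const_mul (hρsmooth i) a (f := ρ)
    have heq : iteratedDeriv i F₁ y = a ^ i * iteratedDeriv i ρ (a * y) := by
      rw [hF₁]; rw [this]
    rw [heq, Real.norm_eq_abs, abs_mul, abs_pow, abs_of_nonneg ha0]
    calc a ^ i * |iteratedDeriv i ρ (a * y)| ≤ c⁻¹ ^ i * M i := by
          apply mul_le_mul (pow_le_pow_left₀ ha0 hac i) (hM i _) (abs_nonneg _) (by positivity)
      _ ≤ c⁻¹ ^ nn * B := by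
          apply mul_le_mul (pow_le_pow_right₀ hc1 hi) (hMB i hi) (hM0 i) (by positivity)
  have hF₂d : ∀ i, i ≤ nn → ∀ y : ℝ, ‖iteratedFDeriv ℝ i F₂ y‖ ≤ P := by
    intro i hi y
    rw [norm_iteratedFDeriv_eq_norm_iteratedDeriv]
    set g2 : ℝ → ℝ := fun t => ρ (b - t) with hg2
    have hg2sm : ContDiff ℝ i g2 := (hρsmooth i).comp (contDiff_const.sub contDiff_id)
    have hF₂g : F₂ = fun ξ => g2 (b * ξ) := by
      funext ξ; rw [hF₂, hg2]; ring_nf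
    have h1 : iteratedDeriv i F₂ y = b ^ i * iteratedDeriv i g2 (b * y) := by
      rw [hF₂g, iteratedDeriv_comp_const_mul hg2sm b]
    have h2 : ∀ z : ℝ, |iteratedDeriv i g2 z| = |iteratedDeriv i ρ (b - z)| := by
      intro z
      have hgg : g2 = fun t => (fun s => ρ (b + s)) (-t) := by
        funext t; simp [hg2, sub_eq_add_neg]
      rw [hgg, iteratedDeriv_comp_neg i (fun s => ρ (b + s)) z,
        iteratedDeriv_comp_const_add i ρ b]
      rw [smul_eq_mul, abs_mul, abs_pow, abs_neg, abs_one, one_pow, one_mul, sub_eq_add_neg]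
    rw [h1, Real.norm_eq_abs, abs_mul, abs_pow, abs_of_nonneg hb0, h2]
    calc b ^ i * |iteratedDeriv i ρ (b - b * y)| ≤ c⁻¹ ^ i * M i := by
          apply mul_le_mul (pow_le_pow_left₀ hb0 hbc i) (hM i _) (abs_nonneg _) (by positivity)
      _ ≤ c⁻¹ ^ nn * B := by
          apply mul_le_mul (pow_le_pow_right₀ hc1 hi) (hMB i hi) (hM0 i) (by positivity)
  -- derivative bounds for G
  have hGd : ∀ n, n ≤ nn → ∀ y : ℝ, ‖iteratedDeriv n G y‖ ≤ D := by
    intro n hn y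
    rw [← norm_iteratedFDeriv_eq_norm_iteratedDeriv, hGeq]
    have hmul := norm_iteratedFDeriv_mul_le (𝕜 := ℝ) (N := (nn : WithTop ℕ∞))
      (Complex.ofRealCLM.contDiff.comp ((hF₁sm nn).of_le le_rfl))
      (Complex.ofRealCLM.contDiff.comp ((hF₂sm nn).of_le le_rfl)) y
      (n := n) (by exact_mod_cast hn)
    refine hmul.trans ?_
    have hterm : ∀ i ∈ Finset.range (n + 1),
        (n.choose i : ℝ) * ‖iteratedFDeriv ℝ i (fun ξ : ℝ => (F₁ ξ : ℂ)) y‖ *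
          ‖iteratedFDeriv ℝ (n - i) (fun ξ : ℝ => (F₂ ξ : ℂ)) y‖ ≤ (n.choose i : ℝ) * (P * P) := by
      intro i hi
      rw [Finset.mem_range, Nat.lt_succ_iff] at hi
      have e1 : ‖iteratedFDeriv ℝ i (fun ξ : ℝ => (F₁ ξ : ℂ)) y‖ = ‖iteratedFDeriv ℝ i F₁ y‖ := by
        have := Complex.ofRealLI.norm_iteratedFDeriv_comp_left (f := F₁)
          ((hF₁sm nn).of_le le_rfl).contDiffAt (x := y) (i := i) (by exact_mod_cast le_trans hi hn)
        simpa [Function.comp_def, Complex.ofRealLI_apply] using this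
      have e2 : ‖iteratedFDeriv ℝ (n - i) (fun ξ : ℝ => (F₂ ξ : ℂ)) y‖
          = ‖iteratedFDeriv ℝ (n - i) F₂ y‖ := by
        have := Complex.ofRealLI.norm_iteratedFDeriv_comp_left (f := F₂)
          ((hF₂sm nn).of_le le_rfl).contDiffAt (x := y) (i := n - i)
          (by exact_mod_cast le_trans (Nat.sub_le n i) hn)
        simpa [Function.comp_def, Complex.ofRealLI_apply] using this
      rw [e1, e2, mul_assoc]
      refine mul_le_mul_of_nonneg_left ?_ (by positivity)
      exact mul_le_mul (hF₁d i (le_trans hi hn) y)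
        (hF₂d (n - i) (le_trans (Nat.sub_le n i) hn) y) (norm_nonneg _) hP0
    refine (Finset.sum_le_sum hterm).trans ?_
    rw [← Finset.sum_mul]
    have hsum2 : (∑ i ∈ Finset.range (n + 1), (n.choose i : ℝ)) = 2 ^ n := by
      exact_mod_cast Nat.sum_range_choose n
    rw [hsum2, hD]
    have : (2 : ℝ) ^ n ≤ 2 ^ nn := pow_le_pow_right₀ one_le_two hn
    nlinarith [hP0, sq_nonneg P]
  -- support of iterated derivatives of G
  have hGsupp : ∀ n : ℕ, ∀ y : ℝ, y ∉ Set.Icc (-1 : ℝ) 2 → iteratedDeriv n G y = 0 := by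
    intro n y hy
    rw [Set.mem_Icc, not_and_or] at hy
    rcases hy with hy | hy
    · push_neg at hy
      have heq : Set.EqOn G (fun _ => (0 : ℂ)) (Set.Iio (-1 : ℝ)) := by
        intro ξ hξ
        have hρz : ρ (a * ξ) = 0 := by
          apply hρneg
          have : a * ξ ≤ a * (-1) := mul_le_mul_of_nonneg_left (le_of_lt hξ) ha0
          linarith
        simp [hGeq, hF₁, hρz]
      rw [heq.iteratedDeriv_of_isOpen isOpen_Iio n hy]
      rw [aux_iteratedDeriv_zero_fun]
    · push_neg at hy
      have heq : Set.EqOn G (fun _ => (0 : ℂ)) (Set.Ioi (2 : ℝ)) := by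
        intro ξ hξ
        have hρz : ρ (b * (1 - ξ)) = 0 := by
          apply hρneg
          have h2 : (1 : ℝ) - ξ ≤ -1 := by
            have := Set.mem_Ioi.1 hξ; linarith
          have : b * (1 - ξ) ≤ b * (-1) := mul_le_mul_of_nonneg_left h2 hb0
          linarith
        simp [hGeq, hF₂, hρz]
      rw [heq.iteratedDeriv_of_isOpen isOpen_Ioi n hy]
      rw [aux_iteratedDeriv_zero_fun]
  -- integrability of iterated derivatives of G
  have hGcont : ∀ n : ℕ, Continuous (iteratedDeriv n G) := fun n =>
    (hGsm (n + 1)).continuous_iteratedDeriv n (by exact_mod_cast Nat.le_succ n)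
  have hGint : ∀ n : ℕ, Integrable (iteratedDeriv n G) := by
    intro n
    exact (hGcont n).integrable_of_hasCompactSupport
      (HasCompactSupport.intro isCompact_Icc (hGsupp n))
  -- integral bound
  have hInt3 : ∀ n, n ≤ nn → (∫ y : ℝ, ‖iteratedDeriv n G y‖) ≤ 3 * D := by
    intro n hn
    have hre : (∫ y : ℝ, ‖iteratedDeriv n G y‖)
        = ∫ y in Set.Icc (-1 : ℝ) 2, ‖iteratedDeriv n G y‖ := by
      refine (setIntegral_eq_integral_of_forall_compl_eq_zero ?_).symm
      intro y hy
      rw [hGsupp n y hy, norm_zero]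
    rw [hre]
    have h1 : (∫ y in Set.Icc (-1 : ℝ) 2, ‖iteratedDeriv n G y‖)
        ≤ ∫ _ in Set.Icc (-1 : ℝ) 2, D := by
      apply setIntegral_mono_on ((hGint n).norm.integrableOn)
        (integrableOn_const (by rw [Real.volume_Icc]; exact ENNReal.ofReal_ne_top))
        measurableSet_Icc
      intro y _
      exact hGd n hn y
    refine h1.trans ?_
    rw [setIntegral_const, Real.volume_real_Icc_of_le (by norm_num), smul_eq_mul]
    norm_num
  -- relate centralBell to the Mathlib Fourier integral
  set w : ℝ := -x / (2 * Real.pi) with hw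
  have hFeq : (∫ ξ : ℝ, G ξ * Complex.exp (Complex.I * x * ξ)) = 𝓕 G w := by
    rw [Real.fourier_real_eq_integral_exp_smul]
    refine integral_congr_ae (Filter.Eventually.of_forall fun v => ?_)
    have harg : ((-2 * Real.pi * v * w : ℝ) : ℂ) * Complex.I = Complex.I * x * v := by
      have : (-2 * Real.pi * v * w : ℝ) = v * x := by
        rw [hw]; field_simp
      rw [this]; push_cast; ring
    simp only [smul_eq_mul, harg]; ring
  have hcb : centralBell ρ α α' ε ε' x
      = ((Real.sqrt (2 * Real.pi) : ℝ) : ℂ)⁻¹ * 𝓕 G w := by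
    rw [← hFeq]; rfl
  -- norm of the prefactor
  have hsqrt1 : (1 : ℝ) ≤ Real.sqrt (2 * Real.pi) := by
    rw [show (1 : ℝ) = Real.sqrt 1 from (Real.sqrt_one).symm]
    exact Real.sqrt_le_sqrt (by nlinarith [Real.pi_gt_three])
  have hnormcb : ‖centralBell ρ α α' ε ε' x‖ ≤ ‖𝓕 G w‖ := by
    rw [hcb, norm_mul]
    have : ‖((Real.sqrt (2 * Real.pi) : ℝ) : ℂ)⁻¹‖ ≤ 1 := by
      rw [norm_inv, Complex.norm_real, Real.norm_eq_abs,
        abs_of_nonneg (Real.sqrt_nonneg _)]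
      exact inv_le_one_of_one_le₀ hsqrt1
    calc ‖((Real.sqrt (2 * Real.pi) : ℝ) : ℂ)⁻¹‖ * ‖𝓕 G w‖ ≤ 1 * ‖𝓕 G w‖ :=
          mul_le_mul_of_nonneg_right this (norm_nonneg _)
      _ = ‖𝓕 G w‖ := one_mul _
  -- trivial bound for the Fourier transform
  have htriv : ‖𝓕 G w‖ ≤ 3 * D := by
    refine le_trans ?_ (by simpa [iteratedDeriv_zero] using hInt3 0 (Nat.zero_le nn))
    exact VectorFourier.norm_fourierIntegral_le_integral_norm _ _ _ _ _
  -- decay bound for the Fourier transform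
  have hdecay : ‖𝓕 G w‖ * |x| ^ nn ≤ 3 * D := by
    have hFd := Real.fourier_iteratedDeriv (N := (nn : ℕ∞)) (n := nn)
      ((hGsm nn).of_le le_rfl) (fun n _ => hGint n) le_rfl
    have h1 : ‖𝓕 (iteratedDeriv nn G) w‖ ≤ 3 * D := by
      refine le_trans ?_ (hInt3 nn le_rfl)
      exact VectorFourier.norm_fourierIntegral_le_integral_norm _ _ _ _ _
    simp only [hFd] at h1
    have h2' : ‖(2 * (Real.pi : ℂ) * Complex.I * (w : ℂ))‖ = 2 * Real.pi * |w| := by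
      simp [norm_mul, Complex.norm_real, Complex.norm_I, Real.norm_eq_abs,
        abs_of_pos Real.pi_pos]
    have h2 : ‖((2 * Real.pi * Complex.I * w) ^ nn : ℂ) • 𝓕 G w‖
        = (2 * Real.pi * |w|) ^ nn * ‖𝓕 G w‖ := by
      rw [norm_smul, norm_pow, h2']
    have h3 : 2 * Real.pi * |w| = |x| := by
      rw [hw, abs_div, abs_neg, abs_of_nonneg (by positivity : (0:ℝ) ≤ 2 * Real.pi)]
      field_simp
    rw [h2, h3] at h1
    linarith [h1]
  -- conclude
  have hx1 : (0 : ℝ) < 1 + |x| := by positivity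
  rw [Real.rpow_neg hx1.le, ← div_eq_mul_inv, le_div_iff₀ (Real.rpow_pos_of_pos hx1 r)]
  have hrle : (1 + |x|) ^ r ≤ (1 + |x|) ^ (nn : ℕ) := by
    rw [← Real.rpow_natCast (1 + |x|) nn]
    exact Real.rpow_le_rpow_of_exponent_le (by linarith [abs_nonneg x]) hrnn
  rcases le_or_gt (|x|) 1 with hxs | hxl
  · have h1 : (1 + |x|) ^ (nn : ℕ) ≤ 2 ^ nn :=
      pow_le_pow_left₀ hx1.le (by linarith) nn
    calc ‖centralBell ρ α α' ε ε' x‖ * (1 + |x|) ^ r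
        ≤ (3 * D) * (2 ^ nn) := by
          apply mul_le_mul (hnormcb.trans htriv) (hrle.trans h1)
            (Real.rpow_nonneg hx1.le r) (by linarith)
      _ = 3 * D * 2 ^ nn := by ring
  · have h1 : (1 + |x|) ^ (nn : ℕ) ≤ (2 * |x|) ^ nn :=
      pow_le_pow_left₀ hx1.le (by linarith) nn
    have h2 : ‖centralBell ρ α α' ε ε' x‖ * (1 + |x|) ^ r
        ≤ ‖𝓕 G w‖ * ((2 * |x|) ^ nn) :=
      mul_le_mul hnormcb (hrle.trans h1) (Real.rpow_nonneg hx1.le r) (norm_nonneg _)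
    refine h2.trans ?_
    have : ‖𝓕 G w‖ * (2 * |x|) ^ nn = (‖𝓕 G w‖ * |x| ^ nn) * 2 ^ nn := by
      rw [mul_pow]; ring
    rw [this]
    exact mul_le_mul_of_nonneg_right hdecay (by positivity)
end

section
/- Let I = [α_I, α'_I) and J = [α_J, α'_J) be bounded half-open intervals with α'_I = α_J (adjacent) and compatible cutoff radii: ε'_I = ε_J, ε_I + ε'_I ≤ |I| and ε_J + ε'_J ≤ |J|. Then for every f ∈ L²(ℝ; ℂ) one has (𝓕 𝒫_I f)(ξ) + (𝓕 𝒫_J f)(ξ) = (𝓕 f)(ξ) for almost every ξ ∈ [α_I + ε_I, α'_J − ε'_J]. -/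
open MeasureTheory

/-- Let `I = [αI, αI')` and `J = [αI', αJ')` be adjacent intervals
with compatible cutoff radii.  With `F` the Fourier transform (a unitary of `L²(ℝ;ℂ)`
characterized by the usual integral formula on integrable functions) and `P_I`, `P_J`
the operators defined on the Fourier side by the bell-function formula, for every
`f ∈ L²(ℝ;ℂ)` one has `(𝓕 𝒫_I f)(ξ) + (𝓕 𝒫_J f)(ξ) = (𝓕 f)(ξ)` for almost every
`ξ ∈ [αI + εI, αJ' − ε'J]`. -/
theorem stmt14 (ρ : ℝ → ℝ) (hρsmooth : ∀ m : ℕ, ContDiff ℝ m ρ)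
    (hρ0 : ∀ ξ, 0 ≤ ρ ξ) (hρ1 : ∀ ξ, ρ ξ ≤ 1)
    (hρneg : ∀ ξ, ξ ≤ -1 → ρ ξ = 0) (hρpos : ∀ ξ, 1 ≤ ξ → ρ ξ = 1)
    (hρsq : ∀ ξ, ρ ξ ^ 2 + ρ (-ξ) ^ 2 = 1)
    (αI αI' αJ' : ℝ) (hI : αI < αI') (hJ : αI' < αJ')
    (εI εI' εJ' : ℝ) (hεI : 0 < εI) (hεI' : 0 < εI') (hεJ' : 0 < εJ')
    (hsumI : εI + εI' ≤ αI' - αI) (hsumJ : εI' + εJ' ≤ αJ' - αI')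
    (F : Lp ℂ 2 (volume : Measure ℝ) ≃ₗᵢ[ℂ] Lp ℂ 2 (volume : Measure ℝ))
    (hF : ∀ f : Lp ℂ 2 (volume : Measure ℝ), Integrable (⇑f) volume →
      (F f : ℝ → ℂ) =ᵐ[volume] fun ξ =>
        ((Real.sqrt (2 * Real.pi))⁻¹ : ℂ) *
          ∫ x : ℝ, f x * Complex.exp (-(Complex.I * x * ξ)))
    (PI PJ : Lp ℂ 2 (volume : Measure ℝ) →L[ℂ] Lp ℂ 2 (volume : Measure ℝ))
    (hPI : ∀ f : Lp ℂ 2 (volume : Measure ℝ),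
      (F (PI f) : ℝ → ℂ) =ᵐ[volume] fun ξ =>
        (bellFn ρ αI αI' εI εI' ξ : ℂ) *
          ((bellFn ρ αI αI' εI εI' ξ : ℂ) * (F f : ℝ → ℂ) ξ +
            (bellFn ρ αI αI' εI εI' (2 * αI - ξ) : ℂ) * (F f : ℝ → ℂ) (2 * αI - ξ) -
            (bellFn ρ αI αI' εI εI' (2 * αI' - ξ) : ℂ) * (F f : ℝ → ℂ) (2 * αI' - ξ)))
    (hPJ : ∀ f : Lp ℂ 2 (volume : Measure ℝ),
      (F (PJ f) : ℝ → ℂ) =ᵐ[volume] fun ξ =>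
        (bellFn ρ αI' αJ' εI' εJ' ξ : ℂ) *
          ((bellFn ρ αI' αJ' εI' εJ' ξ : ℂ) * (F f : ℝ → ℂ) ξ +
            (bellFn ρ αI' αJ' εI' εJ' (2 * αI' - ξ) : ℂ) * (F f : ℝ → ℂ) (2 * αI' - ξ) -
            (bellFn ρ αI' αJ' εI' εJ' (2 * αJ' - ξ) : ℂ) * (F f : ℝ → ℂ) (2 * αJ' - ξ))) :
    ∀ f : Lp ℂ 2 (volume : Measure ℝ),
      ∀ᵐ ξ ∂(volume : Measure ℝ), ξ ∈ Set.Icc (αI + εI) (αJ' - εJ') →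
        (F (PI f) : ℝ → ℂ) ξ + (F (PJ f) : ℝ → ℂ) ξ = (F f : ℝ → ℂ) ξ := by
 
  intro f
  filter_upwards [hPI f, hPJ f] with ξ h1 h2 hξ
  obtain ⟨hξ1, hξ2⟩ := hξ
  rw [h1, h2]
  simp only [bellFn]
  have e1 : αI' - (2 * αI' - ξ) = ξ - αI' := by ring
  have e2 : 2 * αI' - ξ - αI' = αI' - ξ := by ring
  rw [e1, e2]
  have hL : ρ ((ξ - αI) / εI) = 1 := hρpos _ ((le_div_iff₀ hεI).mpr (by linarith))
  have hR : ρ ((αJ' - ξ) / εJ') = 1 := hρpos _ ((le_div_iff₀ hεJ').mpr (by linarith))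
  have h0I : ρ ((2 * αI - ξ - αI) / εI) = 0 := hρneg _ (by
    rw [div_le_iff₀ hεI]; linarith)
  have h0J : ρ ((αJ' - (2 * αJ' - ξ)) / εJ') = 0 := hρneg _ (by
    rw [div_le_iff₀ hεJ']; linarith)
  rw [hL, hR, h0I, h0J]
  set a := ρ ((αI' - ξ) / εI') with ha
  set b := ρ ((ξ - αI') / εI') with hb
  set c := ρ ((2 * αI' - ξ - αI) / εI) with hc
  set d := ρ ((αJ' - (2 * αI' - ξ)) / εJ') with hd
  have hab : a ^ 2 + b ^ 2 = 1 := by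
    have h := hρsq ((ξ - αI') / εI')
    rw [← neg_div, neg_sub] at h
    rw [ha, hb]; linarith
  have hkey : a * b * (d - c) = 0 := by
    rcases le_or_gt ξ (αI' - εI') with h | h
    · have hb0 : b = 0 := hρneg _ (by rw [div_le_iff₀ hεI']; linarith)
      rw [hb0]; ring
    · rcases le_or_gt (αI' + εI') ξ with h' | h'
      · have ha0 : a = 0 := hρneg _ (by rw [div_le_iff₀ hεI']; linarith)
        rw [ha0]; ring
      · have hc1 : c = 1 := hρpos _ ((le_div_iff₀ hεI).mpr (by linarith))
        have hd1 : d = 1 := hρpos _ ((le_div_iff₀ hεJ').mpr (by linarith))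
        rw [hc1, hd1]; ring
  have habC : (a : ℂ) ^ 2 + (b : ℂ) ^ 2 = 1 := by exact_mod_cast hab
  have hkeyC : (a : ℂ) * (b : ℂ) * ((d : ℂ) - (c : ℂ)) = 0 := by exact_mod_cast hkey
  push_cast
  linear_combination (F f : ℝ → ℂ) ξ * habC + (F f : ℝ → ℂ) (2 * αI' - ξ) * hkeyC
end

section
/- Let I = [α_I, α'_I) and J = [α_J, α'_J) be bounded half-open intervals with α'_I = α_J (adjacent) and compatible cutoff radii: ε'_I = ε_J, ε_I + ε'_I ≤ |I| and ε_J + ε'_J ≤ |J|. Then 𝒫_I + 𝒫_J = 𝒫_{I∪J} as operators on L²(ℝ; ℂ), where I∪J = [α_I, α'_J) carries the cutoff radii ε_I at its left endpoint and ε'_J at its right endpoint. -/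
open MeasureTheory

section aux

variable {ρ : ℝ → ℝ}
    (hρneg : ∀ ξ, ξ ≤ -1 → ρ ξ = 0) (hρpos : ∀ ξ, 1 ≤ ξ → ρ ξ = 1)
    (hρsq : ∀ ξ, ρ ξ ^ 2 + ρ (-ξ) ^ 2 = 1)
    {αI αI' αJ' : ℝ} (hI : αI < αI') (hJ : αI' < αJ')
    {εI εI' εJ' : ℝ} (hεI : 0 < εI) (hεI' : 0 < εI') (hεJ' : 0 < εJ')
    (hsumI : εI + εI' ≤ αI' - αI) (hsumJ : εI' + εJ' ≤ αJ' - αI')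

include hρneg hρpos hρsq hI hJ hεI hεI' hεJ' hsumI hsumJ

lemma bell_fact1 (ξ : ℝ) :
    bellFn ρ αI αI' εI εI' ξ ^ 2 + bellFn ρ αI' αJ' εI' εJ' ξ ^ 2
      = bellFn ρ αI αJ' εI εJ' ξ ^ 2 := by
  simp only [bellFn]
  rcases le_or_gt ξ (αI' - εI') with h1 | h1
  · rw [hρpos ((αI' - ξ) / εI') (by rw [le_div_iff₀ hεI']; linarith),
      hρneg ((ξ - αI') / εI') (by rw [div_le_iff₀ hεI']; linarith),
      hρpos ((αJ' - ξ) / εJ') (by rw [le_div_iff₀ hεJ']; linarith)]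
    ring
  rcases le_or_gt (αI' + εI') ξ with h2 | h2
  · rw [hρneg ((αI' - ξ) / εI') (by rw [div_le_iff₀ hεI']; linarith),
      hρpos ((ξ - αI') / εI') (by rw [le_div_iff₀ hεI']; linarith),
      hρpos ((ξ - αI) / εI) (by rw [le_div_iff₀ hεI]; linarith)]
    ring
  · rw [hρpos ((ξ - αI) / εI) (by rw [le_div_iff₀ hεI]; linarith),
      hρpos ((αJ' - ξ) / εJ') (by rw [le_div_iff₀ hεJ']; linarith)]
    have h := hρsq ((αI' - ξ) / εI')
    rw [show -((αI' - ξ) / εI') = (ξ - αI') / εI' by ring] at h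
    nlinarith [h]

lemma bell_fact2 (ξ : ℝ) :
    bellFn ρ αI αI' εI εI' ξ * bellFn ρ αI αI' εI εI' (2 * αI - ξ)
      = bellFn ρ αI αJ' εI εJ' ξ * bellFn ρ αI αJ' εI εJ' (2 * αI - ξ) := by
  simp only [bellFn]
  rcases le_or_gt ξ (αI - εI) with h1 | h1
  · rw [hρneg ((ξ - αI) / εI) (by rw [div_le_iff₀ hεI]; linarith)]
    ring
  rcases le_or_gt (αI + εI) ξ with h2 | h2
  · rw [hρneg ((2 * αI - ξ - αI) / εI) (by rw [div_le_iff₀ hεI]; linarith)]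
    ring
  · rw [hρpos ((αI' - ξ) / εI') (by rw [le_div_iff₀ hεI']; linarith),
      hρpos ((αI' - (2 * αI - ξ)) / εI') (by rw [le_div_iff₀ hεI']; linarith),
      hρpos ((αJ' - ξ) / εJ') (by rw [le_div_iff₀ hεJ']; linarith),
      hρpos ((αJ' - (2 * αI - ξ)) / εJ') (by rw [le_div_iff₀ hεJ']; linarith)]

lemma bell_fact3 (ξ : ℝ) :
    bellFn ρ αI' αJ' εI' εJ' ξ * bellFn ρ αI' αJ' εI' εJ' (2 * αJ' - ξ)
      = bellFn ρ αI αJ' εI εJ' ξ * bellFn ρ αI αJ' εI εJ' (2 * αJ' - ξ) := by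
  simp only [bellFn]
  rcases le_or_gt ξ (αJ' - εJ') with h1 | h1
  · rw [hρneg ((αJ' - (2 * αJ' - ξ)) / εJ') (by rw [div_le_iff₀ hεJ']; linarith)]
    ring
  rcases le_or_gt (αJ' + εJ') ξ with h2 | h2
  · rw [hρneg ((αJ' - ξ) / εJ') (by rw [div_le_iff₀ hεJ']; linarith)]
    ring
  · rw [hρpos ((ξ - αI') / εI') (by rw [le_div_iff₀ hεI']; linarith),
      hρpos ((2 * αJ' - ξ - αI') / εI') (by rw [le_div_iff₀ hεI']; linarith),
      hρpos ((ξ - αI) / εI) (by rw [le_div_iff₀ hεI]; linarith),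
      hρpos ((2 * αJ' - ξ - αI) / εI) (by rw [le_div_iff₀ hεI]; linarith)]

lemma bell_fact4 (ξ : ℝ) :
    bellFn ρ αI αI' εI εI' ξ * bellFn ρ αI αI' εI εI' (2 * αI' - ξ)
      = bellFn ρ αI' αJ' εI' εJ' ξ * bellFn ρ αI' αJ' εI' εJ' (2 * αI' - ξ) := by
  simp only [bellFn]
  rcases le_or_gt ξ (αI' - εI') with h1 | h1
  · rw [hρneg ((αI' - (2 * αI' - ξ)) / εI') (by rw [div_le_iff₀ hεI']; linarith),
      hρneg ((ξ - αI') / εI') (by rw [div_le_iff₀ hεI']; linarith)]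
    ring
  rcases le_or_gt (αI' + εI') ξ with h2 | h2
  · rw [hρneg ((αI' - ξ) / εI') (by rw [div_le_iff₀ hεI']; linarith),
      hρneg ((2 * αI' - ξ - αI') / εI') (by rw [div_le_iff₀ hεI']; linarith)]
    ring
  · rw [hρpos ((ξ - αI) / εI) (by rw [le_div_iff₀ hεI]; linarith),
      hρpos ((2 * αI' - ξ - αI) / εI) (by rw [le_div_iff₀ hεI]; linarith),
      hρpos ((αJ' - ξ) / εJ') (by rw [le_div_iff₀ hεJ']; linarith),
      hρpos ((αJ' - (2 * αI' - ξ)) / εJ') (by rw [le_div_iff₀ hεJ']; linarith),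
      show (αI' - (2 * αI' - ξ)) / εI' = (ξ - αI') / εI' by ring,
      show (2 * αI' - ξ - αI') / εI' = (αI' - ξ) / εI' by ring]
    ring

end aux

/-- Let `I = [αI, αI')` and `J = [αI', αJ')` be adjacent intervals
with compatible cutoff radii.  With `F` the Fourier transform (a unitary of `L²(ℝ;ℂ)`
characterized by the usual integral formula on integrable functions), and `P_I`, `P_J`,
`P_{I∪J}` the operators defined on the Fourier side by the bell-function formula —
where `I ∪ J = [αI, αJ')` carries the cutoff radii `εI` and `ε'J` — one has
`𝒫_I + 𝒫_J = 𝒫_{I∪J}` as operators on `L²(ℝ; ℂ)`. -/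
theorem stmt15 (ρ : ℝ → ℝ) (hρsmooth : ∀ m : ℕ, ContDiff ℝ m ρ)
    (hρ0 : ∀ ξ, 0 ≤ ρ ξ) (hρ1 : ∀ ξ, ρ ξ ≤ 1)
    (hρneg : ∀ ξ, ξ ≤ -1 → ρ ξ = 0) (hρpos : ∀ ξ, 1 ≤ ξ → ρ ξ = 1)
    (hρsq : ∀ ξ, ρ ξ ^ 2 + ρ (-ξ) ^ 2 = 1)
    (αI αI' αJ' : ℝ) (hI : αI < αI') (hJ : αI' < αJ')
    (εI εI' εJ' : ℝ) (hεI : 0 < εI) (hεI' : 0 < εI') (hεJ' : 0 < εJ')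
    (hsumI : εI + εI' ≤ αI' - αI) (hsumJ : εI' + εJ' ≤ αJ' - αI')
    (F : Lp ℂ 2 (volume : Measure ℝ) ≃ₗᵢ[ℂ] Lp ℂ 2 (volume : Measure ℝ))
    (hF : ∀ f : Lp ℂ 2 (volume : Measure ℝ), Integrable (⇑f) volume →
      (F f : ℝ → ℂ) =ᵐ[volume] fun ξ =>
        ((Real.sqrt (2 * Real.pi))⁻¹ : ℂ) *
          ∫ x : ℝ, f x * Complex.exp (-(Complex.I * x * ξ)))
    (PI PJ PIJ : Lp ℂ 2 (volume : Measure ℝ) →L[ℂ] Lp ℂ 2 (volume : Measure ℝ))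
    (hPI : ∀ f : Lp ℂ 2 (volume : Measure ℝ),
      (F (PI f) : ℝ → ℂ) =ᵐ[volume] fun ξ =>
        (bellFn ρ αI αI' εI εI' ξ : ℂ) *
          ((bellFn ρ αI αI' εI εI' ξ : ℂ) * (F f : ℝ → ℂ) ξ +
            (bellFn ρ αI αI' εI εI' (2 * αI - ξ) : ℂ) * (F f : ℝ → ℂ) (2 * αI - ξ) -
            (bellFn ρ αI αI' εI εI' (2 * αI' - ξ) : ℂ) * (F f : ℝ → ℂ) (2 * αI' - ξ)))
    (hPJ : ∀ f : Lp ℂ 2 (volume : Measure ℝ),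
      (F (PJ f) : ℝ → ℂ) =ᵐ[volume] fun ξ =>
        (bellFn ρ αI' αJ' εI' εJ' ξ : ℂ) *
          ((bellFn ρ αI' αJ' εI' εJ' ξ : ℂ) * (F f : ℝ → ℂ) ξ +
            (bellFn ρ αI' αJ' εI' εJ' (2 * αI' - ξ) : ℂ) * (F f : ℝ → ℂ) (2 * αI' - ξ) -
            (bellFn ρ αI' αJ' εI' εJ' (2 * αJ' - ξ) : ℂ) * (F f : ℝ → ℂ) (2 * αJ' - ξ)))
    (hPIJ : ∀ f : Lp ℂ 2 (volume : Measure ℝ),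
      (F (PIJ f) : ℝ → ℂ) =ᵐ[volume] fun ξ =>
        (bellFn ρ αI αJ' εI εJ' ξ : ℂ) *
          ((bellFn ρ αI αJ' εI εJ' ξ : ℂ) * (F f : ℝ → ℂ) ξ +
            (bellFn ρ αI αJ' εI εJ' (2 * αI - ξ) : ℂ) * (F f : ℝ → ℂ) (2 * αI - ξ) -
            (bellFn ρ αI αJ' εI εJ' (2 * αJ' - ξ) : ℂ) * (F f : ℝ → ℂ) (2 * αJ' - ξ))) :
    PI + PJ = PIJ := by
  refine ContinuousLinearMap.ext fun f => ?_
  have key : F (PI f) + F (PJ f) = F (PIJ f) := by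
    apply Lp.ext
    filter_upwards [hPI f, hPJ f, hPIJ f, Lp.coeFn_add (F (PI f)) (F (PJ f))]
      with ξ h1 h2 h3 h4
    rw [h4, Pi.add_apply, h1, h2, h3]
    have c1 := congrArg (Complex.ofReal)
      (bell_fact1 hρneg hρpos hρsq hI hJ hεI hεI' hεJ' hsumI hsumJ ξ)
    have c2 := congrArg (Complex.ofReal)
      (bell_fact2 hρneg hρpos hρsq hI hJ hεI hεI' hεJ' hsumI hsumJ ξ)
    have c3 := congrArg (Complex.ofReal)
      (bell_fact3 hρneg hρpos hρsq hI hJ hεI hεI' hεJ' hsumI hsumJ ξ)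
    have c4 := congrArg (Complex.ofReal)
      (bell_fact4 hρneg hρpos hρsq hI hJ hεI hεI' hεJ' hsumI hsumJ ξ)
    push_cast at c1 c2 c3 c4
    linear_combination (F f : ℝ → ℂ) ξ * c1 + (F f : ℝ → ℂ) (2 * αI - ξ) * c2
      - (F f : ℝ → ℂ) (2 * αJ' - ξ) * c3 - (F f : ℝ → ℂ) (2 * αI' - ξ) * c4
  have hsum : PI f + PJ f = PIJ f := F.injective (by rw [map_add]; exact key)
  rw [ContinuousLinearMap.add_apply]; exact hsum
end

section
/- For every r > 0 there exists a constant C_r < ∞, independent of j ∈ ℤ and k ∈ E, such that the tensor-product central bell function G_{R_{j,k}}(x) := ∏_{i=1}^d g_{I^i_{j,k_i}}(x_i) of the Lizorkin rectangle R_{j,k} = I^1_{j,k_1} × ⋯ × I^d_{j,k_d} satisfies |G_{R_{j,k}}(x)| ≤ C_r ⟨x⟩^{-r} for all x ∈ ℝ^d, where ⟨·⟩ is the anisotropic bracket. -/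
open MeasureTheory

/-- Left endpoint of the interval `I^i_{j,k}` of the anisotropic Lizorkin partition:
for `|k| = 1` the interval is `±[0, 2^{(j−1)aᵢ})`; for `|k| = 2` it is
`±[2^{(j−1)aᵢ}, 2^{j aᵢ})`. -/
noncomputable def lizL (ai : ℝ) (j : ℤ) (k : ℤ) : ℝ :=
  if k = 1 then 0
  else if k = -1 then -((2 : ℝ) ^ (((j : ℝ) - 1) * ai))
  else if k = 2 then (2 : ℝ) ^ (((j : ℝ) - 1) * ai)
  else -((2 : ℝ) ^ ((j : ℝ) * ai))

/-- Right endpoint of the interval `I^i_{j,k}`. -/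
noncomputable def lizR (ai : ℝ) (j : ℤ) (k : ℤ) : ℝ :=
  if k = 1 then (2 : ℝ) ^ (((j : ℝ) - 1) * ai)
  else if k = -1 then 0
  else if k = 2 then (2 : ℝ) ^ ((j : ℝ) * ai)
  else -((2 : ℝ) ^ (((j : ℝ) - 1) * ai))

/-- Cutoff radius at the left endpoint of `I^i_{j,k}`: `2^{(j−2)aᵢ}` at `±2^{j aᵢ}` and
`2^{(j−3)aᵢ}` at `0` and `±2^{(j−1)aᵢ}`. -/
noncomputable def lizEpsL (ai : ℝ) (j : ℤ) (k : ℤ) : ℝ :=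
  if k = -2 then (2 : ℝ) ^ (((j : ℝ) - 2) * ai) else (2 : ℝ) ^ (((j : ℝ) - 3) * ai)

/-- Cutoff radius at the right endpoint of `I^i_{j,k}`. -/
noncomputable def lizEpsR (ai : ℝ) (j : ℤ) (k : ℤ) : ℝ :=
  if k = 2 then (2 : ℝ) ^ (((j : ℝ) - 2) * ai) else (2 : ℝ) ^ (((j : ℝ) - 3) * ai)

/-- The tensor-product central bell function
`G_{R_{j,k}}(x) = ∏ᵢ g_{I^i_{j,kᵢ}}(xᵢ)` of a Lizorkin rectangle. -/
noncomputable def mCentralBell (d : ℕ) (ρ : ℝ → ℝ) (a : Fin d → ℝ) (j : ℤ)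
    (k : Fin d → ℤ) (x : EuclideanSpace ℝ (Fin d)) : ℂ :=
  ∏ i, centralBell ρ (lizL (a i) j (k i)) (lizR (a i) j (k i))
    (lizEpsL (a i) j (k i)) (lizEpsR (a i) j (k i)) (x i)

/-- The index set `E = E₂^d ∖ E₁^d` with `E₂ = {±1, ±2}`, `E₁ = {±1}`. -/
def idxE (d : ℕ) : Set (Fin d → ℤ) :=
  {k | (∀ i, k i = 1 ∨ k i = -1 ∨ k i = 2 ∨ k i = -2) ∧ ¬ (∀ i, k i = 1 ∨ k i = -1)}

section Aux

open FourierTransform Real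

lemma fourier_decay {f : ℝ → ℂ} (hf : ContDiff ℝ (↑(⊤ : ℕ∞)) f) (hs : HasCompactSupport f)
    (n : ℕ) : ∃ C, ∀ w : ℝ, ‖w‖ ^ n * ‖𝓕 f w‖ ≤ C := by
  have h'f : ∀ (k m : ℕ), (k:ℕ∞) ≤ 0 → (m:ℕ∞) ≤ ⊤ →
      Integrable (fun v : ℝ ↦ ‖v‖ ^ k * ‖iteratedFDeriv ℝ m f v‖) := by
    intro k m _ _
    apply Continuous.integrable_of_hasCompactSupport
    · exact (continuous_norm.pow k).mul
        ((hf.continuous_iteratedFDeriv (by exact_mod_cast le_top)).norm)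
    · exact ((hs.iteratedFDeriv m).norm).mul_left
  refine ⟨(2 * π) ^ 0 * (2 * (0:ℕ) + 2) ^ n *
      ∑ p ∈ Finset.range (0 + 1) ×ˢ Finset.range (n + 1),
        ∫ v, ‖v‖ ^ p.1 * ‖iteratedFDeriv ℝ p.2 f v‖, fun w => ?_⟩
  have := Real.pow_mul_norm_iteratedFDeriv_fourier_le (K := 0) (N := ⊤) hf h'f
    (k := 0) (n := n) le_rfl le_top w
  simpa [norm_iteratedFDeriv_zero] using this

lemma invFourier_eq (g : ℝ → ℂ) (x : ℝ) :
    invFourier g x = ((Real.sqrt (2 * Real.pi))⁻¹ : ℂ) * 𝓕 g (-x / (2 * π)) := by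
  rw [invFourier, Real.fourier_eq']
  simp only [RCLike.inner_apply, conj_trivial]
  congr 1
  apply integral_congr_ae
  filter_upwards with ξ
  rw [smul_eq_mul, mul_comm]
  congr 1
  have hπ : (π : ℂ) ≠ 0 := by exact_mod_cast Real.pi_ne_zero
  push_cast
  field_simp

lemma hat_support (ρ : ℝ → ℝ) (hρneg : ∀ ξ, ξ ≤ -1 → ρ ξ = 0)
    {α α' ε ε' : ℝ} (hαα' : α < α') (hε : 0 < ε) (hε' : 0 < ε') :
    ∀ ξ ∉ Set.Icc (-(ε/(α'-α))) (1 + ε'/(α'-α)), centralBellHat ρ α α' ε ε' ξ = 0 := by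
  intro ξ hξ
  have hd : 0 < α' - α := by linarith
  rw [Set.mem_Icc, not_and_or] at hξ
  rcases hξ with h | h
  · push_neg at h
    have he : (α' - α) * (ε / (α' - α)) = ε := by field_simp
    have : (α' - α) * ξ / ε ≤ -1 := by
      rw [div_le_iff₀ hε]
      nlinarith [mul_lt_mul_of_pos_left h hd]
    rw [centralBellHat, hρneg _ this, zero_mul]
  · push_neg at h
    have he : (α' - α) * (ε' / (α' - α)) = ε' := by field_simp
    have h2 : ε' / (α' - α) < ξ - 1 := by linarith
    have : (α' - α) * (1 - ξ) / ε' ≤ -1 := by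
      rw [div_le_iff₀ hε']
      nlinarith [mul_lt_mul_of_pos_left h2 hd]
    rw [centralBellHat, hρneg _ this, mul_zero]

lemma hat_contDiff (ρ : ℝ → ℝ) (hρsmooth : ∀ m : ℕ, ContDiff ℝ m ρ) (α α' ε ε' : ℝ) :
    ContDiff ℝ (↑(⊤ : ℕ∞)) (fun ξ => ((centralBellHat ρ α α' ε ε' ξ : ℝ) : ℂ)) := by
  apply Complex.ofRealCLM.contDiff.comp
  rw [contDiff_infty]
  intro n
  exact ((hρsmooth n).comp ((contDiff_const.mul contDiff_id).div_const _)).mul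
    ((hρsmooth n).comp ((contDiff_const.mul (contDiff_const.sub contDiff_id)).div_const _))

lemma max_pow_le (t : ℝ) (ht : 0 ≤ t) (N : ℕ) : (1 + t) ^ N ≤ 2 ^ N * (1 + t ^ N) := by
  have h1 : (1 + t) ^ N ≤ (2 * max 1 t) ^ N := by
    apply pow_le_pow_left₀ (by linarith)
    have := le_max_left 1 t; have := le_max_right 1 t; linarith
  rw [mul_pow] at h1
  refine h1.trans ?_
  gcongr 2 ^ N * ?_
  rcases le_total t 1 with h | h
  · rw [max_eq_left h]; simp; positivity
  · rw [max_eq_right h]; nlinarith [pow_le_pow_left₀ ht (le_refl t)]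

lemma bell_decay (ρ : ℝ → ℝ) (hρsmooth : ∀ m : ℕ, ContDiff ℝ m ρ)
    (hρneg : ∀ ξ, ξ ≤ -1 → ρ ξ = 0)
    {α α' ε ε' : ℝ} (hαα' : α < α') (hε : 0 < ε) (hε' : 0 < ε') (N : ℕ) :
    ∃ C, 0 ≤ C ∧ ∀ x : ℝ, ‖centralBell ρ α α' ε ε' x‖ * (1 + |x|) ^ N ≤ C := by
  set f : ℝ → ℂ := fun ξ => ((centralBellHat ρ α α' ε ε' ξ : ℝ) : ℂ) with hf
  have hsm := hat_contDiff ρ hρsmooth α α' ε ε'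
  have hsupp : HasCompactSupport f := by
    apply HasCompactSupport.intro (isCompact_Icc
      (a := -(ε/(α'-α))) (b := 1 + ε'/(α'-α)))
    intro ξ hξ
    simp [hf, hat_support ρ hρneg hαα' hε hε' ξ hξ]
  obtain ⟨C0, hC0⟩ := fourier_decay hsm hsupp 0
  obtain ⟨CN, hCN⟩ := fourier_decay hsm hsupp N
  have hC0' : 0 ≤ C0 := le_trans (by positivity) (hC0 0)
  have hCN0 : ∀ w : ℝ, 0 ≤ ‖w‖ ^ N * ‖𝓕 f w‖ := fun w => by positivity
  have hCN' : 0 ≤ CN := le_trans (hCN0 1) (hCN 1)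
  refine ⟨(Real.sqrt (2 * π))⁻¹ * ((2*π) ^ N * (2 ^ N * (C0 + CN))), by positivity, fun x => ?_⟩
  set w : ℝ := -x / (2 * π) with hw
  have hnorm : ‖centralBell ρ α α' ε ε' x‖ = (Real.sqrt (2 * π))⁻¹ * ‖𝓕 f w‖ := by
    rw [centralBell, invFourier_eq, norm_mul]
    congr 1
    rw [norm_inv, Complex.norm_real, Real.norm_eq_abs, abs_of_nonneg (Real.sqrt_nonneg _)]
  have hxw : |x| = 2 * π * |w| := by
    rw [hw, abs_div, abs_neg, abs_of_pos (by positivity : (0:ℝ) < 2*π)]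
    field_simp
  have hkey : (1 + |x|) ^ N * ‖𝓕 f w‖ ≤ (2*π) ^ N * (2 ^ N * (C0 + CN)) := by
    have h1 : (1 + |x|) ^ N ≤ (2*π) ^ N * (1 + |w|) ^ N := by
      rw [← mul_pow]
      apply pow_le_pow_left₀ (by positivity)
      rw [hxw]
      nlinarith [abs_nonneg w, Real.pi_gt_three]
    have h2 : (1 + |w|) ^ N * ‖𝓕 f w‖ ≤ 2 ^ N * (C0 + CN) := by
      have h3 := max_pow_le |w| (abs_nonneg w) N
      have h4 : ‖𝓕 f w‖ ≤ C0 := by have := hC0 w; simpa using this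
      have h5 : |w| ^ N * ‖𝓕 f w‖ ≤ CN := by
        have := hCN w; rwa [Real.norm_eq_abs] at this
      have hF : 0 ≤ ‖𝓕 f w‖ := norm_nonneg _
      nlinarith [pow_nonneg (abs_nonneg w) N,
        pow_nonneg (by linarith [abs_nonneg w] : (0:ℝ) ≤ 1 + |w|) N]
    calc (1 + |x|) ^ N * ‖𝓕 f w‖ ≤ (2*π) ^ N * (1 + |w|) ^ N * ‖𝓕 f w‖ := by
          apply mul_le_mul_of_nonneg_right h1 (norm_nonneg _)
      _ = (2*π) ^ N * ((1 + |w|) ^ N * ‖𝓕 f w‖) := by ring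
      _ ≤ (2*π) ^ N * (2 ^ N * (C0 + CN)) := by
          apply mul_le_mul_of_nonneg_left h2 (by positivity)
  rw [hnorm, mul_assoc]
  exact mul_le_mul_of_nonneg_left (by rw [mul_comm]; exact hkey) (by positivity)

lemma liz_key (ai : ℝ) (j : ℤ) (c : ℝ) :
    (2:ℝ) ^ (((j:ℝ) - c) * ai) = 2 ^ ((j:ℝ) * ai) * 2 ^ ((((0:ℤ):ℝ) - c) * ai) := by
  rw [← Real.rpow_add two_pos]
  congr 1
  push_cast
  ring

lemma liz_key0 (ai : ℝ) (j : ℤ) :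
    (2:ℝ) ^ ((j:ℝ) * ai) = 2 ^ ((j:ℝ) * ai) * 2 ^ (((0:ℤ):ℝ) * ai) := by
  rw [show ((0:ℤ):ℝ) * ai = 0 by push_cast; ring, Real.rpow_zero, mul_one]

lemma lizL_scale (ai : ℝ) (j k : ℤ) : lizL ai j k = 2 ^ ((j:ℝ) * ai) * lizL ai 0 k := by
  unfold lizL
  split_ifs
  · ring
  · rw [liz_key ai j 1]; ring
  · rw [liz_key ai j 1]
  · conv_lhs => rw [liz_key0 ai j]
    ring

lemma lizR_scale (ai : ℝ) (j k : ℤ) : lizR ai j k = 2 ^ ((j:ℝ) * ai) * lizR ai 0 k := by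
  unfold lizR
  split_ifs
  · rw [liz_key ai j 1]
  · ring
  · conv_lhs => rw [liz_key0 ai j]
  · rw [liz_key ai j 1]; ring

lemma lizEpsL_scale (ai : ℝ) (j k : ℤ) : lizEpsL ai j k = 2 ^ ((j:ℝ) * ai) * lizEpsL ai 0 k := by
  unfold lizEpsL
  split_ifs
  · rw [liz_key ai j 2]
  · rw [liz_key ai j 3]

lemma lizEpsR_scale (ai : ℝ) (j k : ℤ) : lizEpsR ai j k = 2 ^ ((j:ℝ) * ai) * lizEpsR ai 0 k := by
  unfold lizEpsR
  split_ifs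
  · rw [liz_key ai j 2]
  · rw [liz_key ai j 3]

lemma lizlt (ai : ℝ) (hai : 0 < ai) (k : ℤ) : lizL ai 0 k < lizR ai 0 k := by
  have hlt : (2:ℝ) ^ ((((0:ℤ):ℝ) - 1) * ai) < 2 ^ (((0:ℤ):ℝ) * ai) := by
    apply Real.rpow_lt_rpow_of_exponent_lt one_lt_two
    push_cast
    nlinarith
  unfold lizL lizR
  split_ifs
  · exact Real.rpow_pos_of_pos two_pos _
  · exact neg_neg_iff_pos.mpr (Real.rpow_pos_of_pos two_pos _)
  · exact hlt
  · exact neg_lt_neg hlt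

lemma lizEpsL_pos (ai : ℝ) (j k : ℤ) : 0 < lizEpsL ai j k := by
  unfold lizEpsL; split_ifs <;> exact Real.rpow_pos_of_pos two_pos _

lemma lizEpsR_pos (ai : ℝ) (j k : ℤ) : 0 < lizEpsR ai j k := by
  unfold lizEpsR; split_ifs <;> exact Real.rpow_pos_of_pos two_pos _

lemma hat_scale (ρ : ℝ → ℝ) {s : ℝ} (hs : s ≠ 0) (α α' ε ε' ξ : ℝ) :
    centralBellHat ρ (s*α) (s*α') (s*ε) (s*ε') ξ = centralBellHat ρ α α' ε ε' ξ := by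
  unfold centralBellHat
  congr 2
  · rw [show (s*α' - s*α)*ξ = s*((α'-α)*ξ) by ring]
    exact mul_div_mul_left _ _ hs
  · rw [show (s*α' - s*α)*(1-ξ) = s*((α'-α)*(1-ξ)) by ring]
    exact mul_div_mul_left _ _ hs

lemma bell_j_indep (ρ : ℝ → ℝ) (ai : ℝ) (j k : ℤ) (x : ℝ) :
    centralBell ρ (lizL ai j k) (lizR ai j k) (lizEpsL ai j k) (lizEpsR ai j k) x
      = centralBell ρ (lizL ai 0 k) (lizR ai 0 k) (lizEpsL ai 0 k) (lizEpsR ai 0 k) x := by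
  have hs : ((2:ℝ) ^ ((j:ℝ) * ai)) ≠ 0 := ne_of_gt (Real.rpow_pos_of_pos two_pos _)
  rw [lizL_scale ai j k, lizR_scale ai j k, lizEpsL_scale ai j k, lizEpsR_scale ai j k]
  unfold centralBell
  congr 1
  funext ξ
  exact_mod_cast congrArg Complex.ofReal
    (hat_scale ρ hs (lizL ai 0 k) (lizR ai 0 k) (lizEpsL ai 0 k) (lizEpsR ai 0 k) ξ)

lemma one_add_sum_le_prod {ι : Type*} (s : Finset ι) (f : ι → ℝ) :
    (∀ i ∈ s, 0 ≤ f i) → 1 + ∑ i ∈ s, f i ≤ ∏ i ∈ s, (1 + f i) := by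
  induction s using Finset.cons_induction with
  | empty => simp
  | cons a s ha ih =>
    intro hf
    rw [Finset.sum_cons, Finset.prod_cons]
    have hfa := hf a (Finset.mem_cons_self a s)
    have hs : ∀ i ∈ s, 0 ≤ f i := fun i hi => hf i (Finset.mem_cons_of_mem hi)
    have hsum : 0 ≤ ∑ i ∈ s, f i := Finset.sum_nonneg hs
    have hih := ih hs
    nlinarith

end Aux

set_option maxHeartbeats 1000000 in
/-- For every `r > 0` there is `C_r < ∞`, independent of `j ∈ ℤ` and
`k ∈ E`, such that `|G_{R_{j,k}}(x)| ≤ C_r ⟨x⟩^{-r}` for all `x ∈ ℝ^d`, where `⟨·⟩` is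
the anisotropic bracket `⟨x⟩ = |(1,x)|_{(1,a)}` and `nb` is the anisotropic quasi-norm on
`ℝ^{1+d}` for the anisotropy `(1, a₁, …, a_d)`. -/
theorem stmt19 (d : ℕ) (hd : 0 < d) (a : Fin d → ℝ) (ha : ∀ i, 1 ≤ a i)
    (ρ : ℝ → ℝ) (hρsmooth : ∀ m : ℕ, ContDiff ℝ m ρ)
    (hρ0 : ∀ ξ, 0 ≤ ρ ξ) (hρ1 : ∀ ξ, ρ ξ ≤ 1)
    (hρneg : ∀ ξ, ξ ≤ -1 → ρ ξ = 0) (hρpos : ∀ ξ, 1 ≤ ξ → ρ ξ = 1)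
    (hρsq : ∀ ξ, ρ ξ ^ 2 + ρ (-ξ) ^ 2 = 1)
    (nb : EuclideanSpace ℝ (Fin (d + 1)) → ℝ)
    (hnb0 : nb 0 = 0)
    (hnb : ∀ y : EuclideanSpace ℝ (Fin (d + 1)), y ≠ 0 → 0 < nb y ∧
      ‖(WithLp.equiv 2 ((i : Fin (d + 1)) → ℝ)).symm
        (fun i => (nb y) ^ (-(Fin.cons (α := fun _ => ℝ) 1 a i)) * y i)‖ = 1)
    (r : ℝ) (hr : 0 < r) :
    ∃ C : ℝ, ∀ (j : ℤ) (k : Fin d → ℤ), k ∈ idxE d → ∀ x : EuclideanSpace ℝ (Fin d),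
      ‖mCentralBell d ρ a j k x‖ ≤
        C * nb ((WithLp.equiv 2 ((i : Fin (d + 1)) → ℝ)).symm
          (Fin.cons (α := fun _ => ℝ) 1 (fun i => x i))) ^ (-r) := by
  classical
  set N := ⌈r⌉₊ with hNdef
  have hrN : r ≤ (N : ℝ) := Nat.le_ceil r
  have hD : ∀ (i : Fin d) (κ : ℤ), ∃ D, 0 ≤ D ∧ ∀ (j : ℤ) (y : ℝ),
      ‖centralBell ρ (lizL (a i) j κ) (lizR (a i) j κ) (lizEpsL (a i) j κ)
        (lizEpsR (a i) j κ) y‖ * (1 + |y|) ^ N ≤ D := by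
    intro i κ
    obtain ⟨D, hD0, hDb⟩ := bell_decay ρ hρsmooth hρneg
      (lizlt (a i) (by linarith [ha i]) κ) (lizEpsL_pos (a i) 0 κ) (lizEpsR_pos (a i) 0 κ) N
    exact ⟨D, hD0, fun j y => by rw [bell_j_indep]; exact hDb y⟩
  choose D hD0 hDb using hD
  set Ec : Fin d → ℝ := fun i => max (max (D i 1) (D i (-1))) (max (D i 2) (D i (-2))) with hEc
  have hEc0 : ∀ i, 0 ≤ Ec i := fun i => le_trans (hD0 i 1) ((le_max_left _ _).trans (le_max_left _ _))
  refine ⟨∏ i, Ec i, fun j k hk x => ?_⟩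
  have hC0 : 0 ≤ ∏ i, Ec i := Finset.prod_nonneg fun i _ => hEc0 i
  set y : EuclideanSpace ℝ (Fin (d+1)) :=
    (WithLp.equiv 2 ((i : Fin (d + 1)) → ℝ)).symm (Fin.cons (α := fun _ => ℝ) 1 (fun i => x i))
    with hy
  have hy0' : y 0 = 1 := by rw [hy]; simp
  have hysucc : ∀ i : Fin d, y i.succ = x i := fun i => by rw [hy]; simp
  have hy0 : y ≠ 0 := by
    intro h
    have h2 : y 0 = 0 := by rw [h]; rfl
    rw [hy0'] at h2
    norm_num at h2
  obtain ⟨ht0, hnorm⟩ := hnb y hy0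
  set t := nb y with htdef
  rw [EuclideanSpace.norm_eq] at hnorm
  simp only [WithLp.equiv_symm_apply, PiLp.toLp_apply, Real.norm_eq_abs, sq_abs] at hnorm
  have hsum : ∑ i : Fin (d+1), (t ^ (-(Fin.cons (α := fun _ => ℝ) 1 a i)) * y i) ^ 2 = 1 := by
    have h := Real.sqrt_eq_one.mp hnorm
    exact h
  have hterm : ∀ i : Fin (d+1), (t ^ (-(Fin.cons (α := fun _ => ℝ) 1 a i)) * y i) ^ 2 ≤ 1 := by
    intro i
    have h := Finset.single_le_sum
      (f := fun i : Fin (d+1) => (t ^ (-(Fin.cons (α := fun _ => ℝ) 1 a i)) * y i) ^ 2)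
      (fun i _ => sq_nonneg _) (Finset.mem_univ i)
    rw [hsum] at h
    exact h
  have ht1 : 1 ≤ t := by
    have h0 := hterm 0
    rw [Fin.cons_zero, hy0', mul_one] at h0
    have hpos : 0 < t ^ (-(1:ℝ)) := Real.rpow_pos_of_pos ht0 _
    have hle1 : t ^ (-(1:ℝ)) ≤ 1 := by nlinarith
    rw [Real.rpow_neg_one] at hle1
    nlinarith [mul_le_mul_of_nonneg_left hle1 (le_of_lt ht0),
      mul_inv_cancel₀ (ne_of_gt ht0)]
  have hle : 1 ≤ t⁻¹ ^ 2 * ∑ i : Fin (d+1), (y i) ^ 2 := by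
    rw [← hsum, Finset.mul_sum]
    apply Finset.sum_le_sum
    intro i _
    have he : 1 ≤ Fin.cons (α := fun _ => ℝ) 1 a i := by
      rcases Fin.eq_zero_or_eq_succ i with rfl | ⟨i', rfl⟩
      · rw [Fin.cons_zero]
      · rw [Fin.cons_succ]; exact ha i'
    have h1 : t ^ (-(Fin.cons (α := fun _ => ℝ) 1 a i)) ≤ t ^ (-(1:ℝ)) :=
      Real.rpow_le_rpow_of_exponent_le ht1 (by linarith)
    have h2 : 0 < t ^ (-(Fin.cons (α := fun _ => ℝ) 1 a i)) := Real.rpow_pos_of_pos ht0 _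
    rw [Real.rpow_neg_one] at h1
    have h3 := sq_nonneg (y i)
    calc (t ^ (-(Fin.cons (α := fun _ => ℝ) 1 a i)) * y i) ^ 2
        = (t ^ (-(Fin.cons (α := fun _ => ℝ) 1 a i))) ^ 2 * (y i) ^ 2 := by ring
      _ ≤ t⁻¹ ^ 2 * (y i) ^ 2 := by
          have hsq : (t ^ (-(Fin.cons (α := fun _ => ℝ) 1 a i))) ^ 2 ≤ t⁻¹ ^ 2 := by nlinarith
          exact mul_le_mul_of_nonneg_right hsq h3
  have hsumy : ∑ i : Fin (d+1), (y i) ^ 2 = 1 + ∑ i : Fin d, (x i) ^ 2 := by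
    rw [Fin.sum_univ_succ, hy0']
    simp [hysucc]
  have ht2 : t ^ 2 ≤ 1 + ∑ i : Fin d, (x i) ^ 2 := by
    rw [hsumy] at hle
    have hq : t ^ 2 * (t⁻¹ ^ 2 * (1 + ∑ i : Fin d, (x i) ^ 2))
        = 1 + ∑ i : Fin d, (x i) ^ 2 := by
      field_simp
    nlinarith [mul_le_mul_of_nonneg_left hle (sq_nonneg t)]
  set P := ∏ i : Fin d, (1 + |x i|) with hP
  have hP1 : 1 ≤ P := by
    calc (1:ℝ) = ∏ _i : Fin d, (1:ℝ) := by simp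
      _ ≤ P := Finset.prod_le_prod (fun i _ => by norm_num)
          (fun i _ => by nlinarith [abs_nonneg (x i)])
  have htP : t ≤ P := by
    have hsx : ∑ i : Fin d, (x i) ^ 2 ≤ (∑ i : Fin d, |x i|) ^ 2 := by
      have h := Finset.sum_sq_le_sq_sum_of_nonneg
        (s := (Finset.univ : Finset (Fin d))) (f := fun i => |x i|)
        (fun i _ => abs_nonneg _)
      simpa [sq_abs] using h
    have hsP : 1 + ∑ i : Fin d, |x i| ≤ P :=
      one_add_sum_le_prod _ _ (fun i _ => abs_nonneg _)
    have hsum0 : 0 ≤ ∑ i : Fin d, |x i| := Finset.sum_nonneg fun i _ => abs_nonneg _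
    nlinarith
  have hg : ‖mCentralBell d ρ a j k x‖ * P ^ N ≤ ∏ i, Ec i := by
    rw [mCentralBell, norm_prod, hP, ← Finset.prod_pow, ← Finset.prod_mul_distrib]
    apply Finset.prod_le_prod
    · intro i _; positivity
    · intro i _
      refine (hDb i (k i) j (x i)).trans ?_
      rcases hk.1 i with h | h | h | h <;> rw [h]
      · exact (le_max_left _ _).trans (le_max_left _ _)
      · exact (le_max_right _ _).trans (le_max_left _ _)
      · exact (le_max_left _ _).trans (le_max_right _ _)
      · exact (le_max_right _ _).trans (le_max_right _ _)
  have hPN : (0:ℝ) < P ^ N := by positivity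
  have htr : t ^ r ≤ P ^ N := by
    calc t ^ r ≤ P ^ r := Real.rpow_le_rpow (le_of_lt ht0) htP (le_of_lt hr)
      _ ≤ P ^ (N:ℝ) := Real.rpow_le_rpow_of_exponent_le hP1 hrN
      _ = P ^ N := Real.rpow_natCast P N
  have htrpos : 0 < t ^ r := Real.rpow_pos_of_pos ht0 r
  have h1 : ‖mCentralBell d ρ a j k x‖ ≤ (∏ i, Ec i) / P ^ N := by
    rw [le_div_iff₀ hPN]
    exact hg
  have h2 : (∏ i, Ec i) / P ^ N ≤ (∏ i, Ec i) * (t ^ r)⁻¹ := by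
    rw [div_eq_mul_inv]
    exact mul_le_mul_of_nonneg_left (inv_anti₀ htrpos htr) hC0
  rw [Real.rpow_neg (le_of_lt ht0)]
  exact h1.trans h2
end
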